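/- Let H be a separable complex Hilbert space, M a von Neumann algebra on H, and {φ_t}_{t≥0} a family of ℂ-linear contractions φ_t : M → M (‖φ_t(a)‖ ≤ ‖a‖) with φ_0 = id and φ_s ∘ φ_t = φ_{s+t}, such that each φ_t is continuous on bounded subsets of M with respect to the strong operator topology, and for each a ∈ M the map t ↦ φ_t(a) is continuous with respect to the strong operator topology. Then φ_t(a) is jointly strongly continuous in t and a at nonzero times: the map (t,a) ↦ φ_t(a) from (0,∞) × M₁ to M₁ (with M₁ the closed unit ball of M carrying the strong operator topology) is continuous. -/

import Mathlib

open scoped NNReal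

/-- The weak operator topology on the bounded operators of a complex Hilbert space:
the topology induced by the matrix coefficients `T ↦ ⟪T x, y⟫`. -/
noncomputable def wotCLM (H : Type*) [NormedAddCommGroup H] [InnerProductSpace ℂ H] :
    TopologicalSpace (H →L[ℂ] H) :=
  TopologicalSpace.induced
    (fun T => fun p : H × H => (inner ℂ (T p.1) p.2 : ℂ)) Pi.topologicalSpace

/-- The strong operator topology on the bounded operators of a complex Hilbert space:
the topology of pointwise norm-convergence. -/
def sotCLM (H : Type*) [NormedAddCommGroup H] [InnerProductSpace ℂ H] :
    TopologicalSpace (H →L[ℂ] H) :=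
  TopologicalSpace.induced (fun T => fun h : H => T h) Pi.topologicalSpace

/-- The weak operator topology on a von Neumann algebra (as a set of operators). -/
noncomputable def wotvN (H : Type*) [NormedAddCommGroup H] [InnerProductSpace ℂ H] [CompleteSpace H]
    (M : VonNeumannAlgebra H) : TopologicalSpace ↥M :=
  TopologicalSpace.induced (fun a : ↥M => (a : H →L[ℂ] H)) (wotCLM H)

/-- The strong operator topology on a von Neumann algebra (as a set of operators). -/
def sotvN (H : Type*) [NormedAddCommGroup H] [InnerProductSpace ℂ H] [CompleteSpace H]
    (M : VonNeumannAlgebra H) : TopologicalSpace ↥M :=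
  TopologicalSpace.induced (fun a : ↥M => (a : H →L[ℂ] H)) (sotCLM H)

/-- The elements of a von Neumann algebra form a `ℂ`-algebra. -/
noncomputable instance vNAlgebra (H : Type*) [NormedAddCommGroup H] [InnerProductSpace ℂ H]
    [CompleteSpace H] (M : VonNeumannAlgebra H) : Algebra ℂ ↥M :=
  Subalgebra.algebra M.toStarSubalgebra.toSubalgebra

open Filter Topology TopologicalSpace

section Aux

variable {H : Type} [NormedAddCommGroup H] [InnerProductSpace ℂ H] [CompleteSpace H]
  {M : VonNeumannAlgebra H}

lemma tendsto_sotvN_iff {X : Type*} {l : Filter X} {f : X → ↥M} {b : ↥M} :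
    Filter.Tendsto f l (@nhds _ (sotvN H M) b) ↔
      ∀ ξ : H, Filter.Tendsto (fun x => ((f x : H →L[ℂ] H)) ξ) l (𝓝 ((b : H →L[ℂ] H) ξ)) := by
  rw [sotvN, @nhds_induced _ _ (sotCLM H) (fun a : ↥M => (a : H →L[ℂ] H)) b,
    Filter.tendsto_comap_iff, sotCLM, nhds_induced, Filter.tendsto_comap_iff]
  exact tendsto_pi_nhds

lemma tendsto_ball_iff {X : Type*} {l : Filter X}
    {f : X → {a : ↥M // ‖(a : H →L[ℂ] H)‖ ≤ 1}} {b : {a : ↥M // ‖(a : H →L[ℂ] H)‖ ≤ 1}} :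
    Filter.Tendsto f l
        (@nhds _ (TopologicalSpace.induced Subtype.val (sotvN H M)) b) ↔
      ∀ ξ : H, Filter.Tendsto (fun x => (((f x : ↥M)) : H →L[ℂ] H) ξ) l
        (𝓝 (((b : ↥M) : H →L[ℂ] H) ξ)) := by
  rw [@nhds_induced _ _ (sotvN H M) Subtype.val b, Filter.tendsto_comap_iff]
  exact tendsto_sotvN_iff

lemma nhds_ball_eq [TopologicalSpace.SeparableSpace H]
    (a : {a : ↥M // ‖(a : H →L[ℂ] H)‖ ≤ 1}) :
    @nhds _ (TopologicalSpace.induced Subtype.val (sotvN H M)) a =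
      Filter.comap
        (fun b : {a : ↥M // ‖(a : H →L[ℂ] H)‖ ≤ 1} =>
          fun k : ℕ => ((b : ↥M) : H →L[ℂ] H) (denseSeq H k))
        (𝓝 (fun k => ((a : ↥M) : H →L[ℂ] H) (denseSeq H k))) := by
  haveI : Nonempty H := ⟨0⟩
  refine le_antisymm ?_ ?_
  · rw [← Filter.tendsto_iff_comap, tendsto_pi_nhds]
    intro k
    exact tendsto_ball_iff.mp tendsto_id (denseSeq H k)
  · rw [← tendsto_id']
    rw [tendsto_ball_iff]
    intro ξ
    rw [Metric.tendsto_nhds]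
    intro ε hε
    obtain ⟨k, hk⟩ := (denseRange_denseSeq H).exists_dist_lt ξ (by positivity : (0:ℝ) < ε/4)
    have hmem : {v : ℕ → H | dist (v k) (((a : ↥M) : H →L[ℂ] H) (denseSeq H k)) < ε/2}
        ∈ 𝓝 (fun k => ((a : ↥M) : H →L[ℂ] H) (denseSeq H k)) := by
      have : IsOpen {v : ℕ → H |
          dist (v k) (((a : ↥M) : H →L[ℂ] H) (denseSeq H k)) < ε/2} :=
        isOpen_lt (Continuous.dist (continuous_apply k) continuous_const) continuous_const
      exact this.mem_nhds (by simp [Metric.mem_ball]; positivity)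
    filter_upwards [Filter.preimage_mem_comap hmem] with b hb
    have hb' : ‖((b : ↥M) : H →L[ℂ] H) (denseSeq H k)
        - ((a : ↥M) : H →L[ℂ] H) (denseSeq H k)‖ < ε/2 := by
      simpa [dist_eq_norm] using hb
    have h1 : ‖((b : ↥M) : H →L[ℂ] H) ξ - ((b : ↥M) : H →L[ℂ] H) (denseSeq H k)‖ ≤ ε/4 := by
      rw [← map_sub]
      calc ‖((b : ↥M) : H →L[ℂ] H) (ξ - denseSeq H k)‖
          ≤ ‖((b : ↥M) : H →L[ℂ] H)‖ * ‖ξ - denseSeq H k‖ :=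
            ContinuousLinearMap.le_opNorm _ _
        _ ≤ 1 * (ε/4) := by
            refine mul_le_mul b.2 ?_ (norm_nonneg _) zero_le_one
            rw [← dist_eq_norm]; exact hk.le
        _ = ε/4 := one_mul _
    have h2 : ‖((a : ↥M) : H →L[ℂ] H) (denseSeq H k) - ((a : ↥M) : H →L[ℂ] H) ξ‖ ≤ ε/4 := by
      rw [← map_sub]
      calc ‖((a : ↥M) : H →L[ℂ] H) (denseSeq H k - ξ)‖
          ≤ ‖((a : ↥M) : H →L[ℂ] H)‖ * ‖denseSeq H k - ξ‖ :=
            ContinuousLinearMap.le_opNorm _ _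
        _ ≤ 1 * (ε/4) := by
            refine mul_le_mul a.2 ?_ (norm_nonneg _) zero_le_one
            rw [← dist_eq_norm, dist_comm]; exact hk.le
        _ = ε/4 := one_mul _
    rw [dist_eq_norm]
    calc ‖((b : ↥M) : H →L[ℂ] H) ξ - ((a : ↥M) : H →L[ℂ] H) ξ‖
        ≤ ‖((b : ↥M) : H →L[ℂ] H) ξ - ((b : ↥M) : H →L[ℂ] H) (denseSeq H k)‖
          + ‖((b : ↥M) : H →L[ℂ] H) (denseSeq H k) - ((a : ↥M) : H →L[ℂ] H) (denseSeq H k)‖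
          + ‖((a : ↥M) : H →L[ℂ] H) (denseSeq H k) - ((a : ↥M) : H →L[ℂ] H) ξ‖ := by
          have := norm_add₃_le (a := ((b : ↥M) : H →L[ℂ] H) ξ
              - ((b : ↥M) : H →L[ℂ] H) (denseSeq H k))
            (b := ((b : ↥M) : H →L[ℂ] H) (denseSeq H k)
              - ((a : ↥M) : H →L[ℂ] H) (denseSeq H k))
            (c := ((a : ↥M) : H →L[ℂ] H) (denseSeq H k) - ((a : ↥M) : H →L[ℂ] H) ξ)
          simpa using this
      _ < ε/4 + ε/2 + ε/4 := by
          have := h1.trans_lt (lt_of_le_of_lt (le_refl _) (by linarith : ε/4 < ε/4 + 1))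
          -- combine
          refine add_lt_add_of_lt_of_le (add_lt_add_of_le_of_lt h1 hb') h2
      _ = ε := by ring

lemma osgood_aux {g : ℕ → ℝ≥0 → ℝ} (hgc : ∀ n, Continuous (g n))
    (hg0 : ∀ u : ℝ≥0, Filter.Tendsto (fun n => g n u) Filter.atTop (𝓝 0))
    {ε : ℝ} (hε : 0 < ε) :
    ∃ U : Set ℝ≥0, IsOpen U ∧ Dense U ∧ ∀ u ∈ U,
      ∃ N : ℕ, ∃ V ∈ 𝓝 u, ∀ n ≥ N, ∀ v ∈ V, g n v ≤ ε := by
  set F : ℕ → Set ℝ≥0 := fun N => ⋂ n, ⋂ (_ : n ≥ N), {u | g n u ≤ ε} with hF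
  have hFclosed : ∀ N, IsClosed (F N) := by
    intro N
    refine isClosed_iInter fun n => isClosed_iInter fun _ => isClosed_le (hgc n) continuous_const
  have hFcover : ⋃ N, F N = Set.univ := by
    ext u
    simp only [Set.mem_iUnion, Set.mem_univ, iff_true]
    have : ∀ᶠ n in atTop, g n u < ε := (hg0 u).eventually (eventually_lt_nhds hε)
    obtain ⟨N, hN⟩ := eventually_atTop.mp this
    exact ⟨N, by simp only [hF, Set.mem_iInter]; exact fun n hn => (hN n hn).le⟩
  refine ⟨⋃ N, interior (F N), isOpen_iUnion fun _ => isOpen_interior,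
    dense_iUnion_interior_of_closed hFclosed hFcover, ?_⟩
  intro u hu
  obtain ⟨N, hN⟩ := Set.mem_iUnion.mp hu
  refine ⟨N, F N, mem_interior_iff_mem_nhds.mp hN, ?_⟩
  intro n hn v hv
  simp only [hF, Set.mem_iInter] at hv
  exact hv n hn

end Aux

/-- A semigroup of contractions on a von Neumann algebra on a separable Hilbert space,
each SOT-continuous on bounded sets and pointwise SOT-continuous in time, is jointly
SOT-continuous on `(0,∞) × M₁`. -/
theorem stmt4 (H : Type) [NormedAddCommGroup H] [InnerProductSpace ℂ H] [CompleteSpace H]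
    [TopologicalSpace.SeparableSpace H] (M : VonNeumannAlgebra H)
    (φ : ℝ≥0 → ↥M →ₗ[ℂ] ↥M)
    (hφ0 : φ 0 = LinearMap.id)
    (hadd : ∀ s t : ℝ≥0, φ (s + t) = (φ s).comp (φ t))
    (hcontr : ∀ (t : ℝ≥0) (a : ↥M), ‖((φ t a : ↥M) : H →L[ℂ] H)‖ ≤ ‖(a : H →L[ℂ] H)‖)
    -- each `φ t` is SOT-continuous on bounded subsets of `M`
    (hbdd : ∀ (t : ℝ≥0) (r : ℝ), @ContinuousOn ↥M ↥M (sotvN H M) (sotvN H M) (φ t)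
      {a : ↥M | ‖(a : H →L[ℂ] H)‖ ≤ r})
    -- `t ↦ φ t a` is SOT-continuous
    (hcont : ∀ a : ↥M, @Continuous ℝ≥0 ↥M _ (sotvN H M) fun t => φ t a) :
    @Continuous ({t : ℝ≥0 // 0 < t} × {a : ↥M // ‖(a : H →L[ℂ] H)‖ ≤ 1})
      {a : ↥M // ‖(a : H →L[ℂ] H)‖ ≤ 1}
      (@instTopologicalSpaceProd _ _ _ (TopologicalSpace.induced Subtype.val (sotvN H M)))
      (TopologicalSpace.induced Subtype.val (sotvN H M))
      (fun p => ⟨φ p.1.1 p.2.1, (hcontr p.1.1 p.2.1).trans p.2.2⟩) := by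
  haveI : Nonempty H := ⟨0⟩
  set τM := sotvN H M with hτM
  set τD := TopologicalSpace.induced
    (Subtype.val : {a : ↥M // ‖(a : H →L[ℂ] H)‖ ≤ 1} → ↥M) τM with hτD
  -- SOT-continuity of `φ u` at `0` within the ball of radius 2, composed with a sequence
  have keySOT : ∀ (u : ℝ≥0) (c : ℕ → ↥M), (∀ n, ‖((c n : ↥M) : H →L[ℂ] H)‖ ≤ 2) →
      (∀ ξ : H, Filter.Tendsto (fun n => ((c n : ↥M) : H →L[ℂ] H) ξ) Filter.atTop (𝓝 0)) →
      ∀ ξ : H, Filter.Tendsto (fun n => ((φ u (c n) : ↥M) : H →L[ℂ] H) ξ)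
        Filter.atTop (𝓝 0) := by
    intro u c hbound hc
    have h0mem : (0 : ↥M) ∈ {a : ↥M | ‖(a : H →L[ℂ] H)‖ ≤ 2} := by
      simp [Set.mem_setOf_eq]
    have cw := (hbdd u 2) 0 h0mem
    have hc' : Filter.Tendsto c Filter.atTop
        (@nhdsWithin _ τM 0 {a : ↥M | ‖(a : H →L[ℂ] H)‖ ≤ 2}) := by
      rw [nhdsWithin, Filter.tendsto_inf]
      constructor
      · rw [tendsto_sotvN_iff]
        intro ξ
        simpa using hc ξ
      · rw [Filter.tendsto_principal]
        exact Filter.Eventually.of_forall fun n => hbound n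
    have := Filter.Tendsto.comp cw hc'
    rw [map_zero] at this
    have := tendsto_sotvN_iff.mp this
    intro ξ
    simpa using this ξ
  rw [continuous_iff_continuousAt]
  rintro ⟨⟨t, ht⟩, a⟩
  haveI hicg : Filter.IsCountablyGenerated (@nhds _ τD a) := by
    rw [nhds_ball_eq]
    infer_instance
  have hnp : @nhds _ (@instTopologicalSpaceProd _ _ _ τD) (⟨⟨t, ht⟩, a⟩ :
      {t : ℝ≥0 // 0 < t} × {a : ↥M // ‖(a : H →L[ℂ] H)‖ ≤ 1}) =
      (𝓝 ⟨t, ht⟩) ×ˢ (@nhds _ τD a) := @nhds_prod_eq _ _ _ τD _ _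
  rw [ContinuousAt, hnp]
  haveI : Filter.IsCountablyGenerated ((𝓝 (⟨t, ht⟩ : {t : ℝ≥0 // 0 < t})) ×ˢ (@nhds _ τD a)) :=
    Filter.prod.isCountablyGenerated _ _
  rw [Filter.tendsto_iff_seq_tendsto]
  intro x hx
  rw [Filter.tendsto_prod_iff'] at hx
  obtain ⟨hx1, hx2⟩ := hx
  -- componentwise convergence
  have ht' : Filter.Tendsto (fun n => ((x n).1 : ℝ≥0)) Filter.atTop (𝓝 t) :=
    ((continuous_subtype_val.tendsto _).comp hx1)
  have ha' : ∀ ξ : H, Filter.Tendsto (fun n => (((x n).2 : ↥M) : H →L[ℂ] H) ξ)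
      Filter.atTop (𝓝 (((a : ↥M) : H →L[ℂ] H) ξ)) := tendsto_ball_iff.mp hx2
  -- the difference sequence
  set c : ℕ → ↥M := fun n => ((x n).2 : ↥M) - (a : ↥M) with hcdef
  have hcnorm : ∀ n, ‖((c n : ↥M) : H →L[ℂ] H)‖ ≤ 2 := by
    intro n
    have : ((c n : ↥M) : H →L[ℂ] H)
        = (((x n).2 : ↥M) : H →L[ℂ] H) - ((a : ↥M) : H →L[ℂ] H) := rfl
    rw [this]
    calc ‖(((x n).2 : ↥M) : H →L[ℂ] H) - ((a : ↥M) : H →L[ℂ] H)‖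
        ≤ ‖(((x n).2 : ↥M) : H →L[ℂ] H)‖ + ‖((a : ↥M) : H →L[ℂ] H)‖ := norm_sub_le _ _
      _ ≤ 1 + 1 := add_le_add (x n).2.2 a.2
      _ = 2 := by norm_num
  have hc0 : ∀ ξ : H, Filter.Tendsto (fun n => ((c n : ↥M) : H →L[ℂ] H) ξ)
      Filter.atTop (𝓝 0) := by
    intro ξ
    have : (fun n => ((c n : ↥M) : H →L[ℂ] H) ξ)
        = fun n => (((x n).2 : ↥M) : H →L[ℂ] H) ξ - ((a : ↥M) : H →L[ℂ] H) ξ := rfl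
    rw [this]
    simpa using (ha' ξ).sub (tendsto_const_nhds (α := ℕ) (x := ((a : ↥M) : H →L[ℂ] H) ξ))
  -- pointwise (in u) SOT convergence to 0
  have keyptwise : ∀ (u : ℝ≥0) (ξ : H),
      Filter.Tendsto (fun n => ((φ u (c n) : ↥M) : H →L[ℂ] H) ξ) Filter.atTop (𝓝 0) :=
    fun u => keySOT u c hcnorm hc0
  -- continuity in u of evaluations
  have hgcont : ∀ (b : ↥M) (ξ : H), Continuous fun u : ℝ≥0 => ((φ u b : ↥M) : H →L[ℂ] H) ξ := by
    intro b ξ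
    rw [continuous_iff_continuousAt]
    intro u
    exact tendsto_sotvN_iff.mp ((hcont b).tendsto u) ξ
  -- Baire / Osgood: dense open sets
  set g : ℕ → ℕ → ℝ≥0 → ℝ :=
    fun k n u => ‖((φ u (c n) : ↥M) : H →L[ℂ] H) (TopologicalSpace.denseSeq H k)‖ with hg
  have hgc : ∀ k n, Continuous (g k n) := fun k n => (hgcont (c n) _).norm
  have hgp : ∀ (k : ℕ) (u : ℝ≥0), Filter.Tendsto (fun n => g k n u) Filter.atTop (𝓝 0) := by
    intro k u
    simpa [hg] using (keyptwise u (TopologicalSpace.denseSeq H k)).norm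
  have hU := fun km : ℕ × ℕ =>
    osgood_aux (hgc km.1) (hgp km.1)
      (by positivity : (0:ℝ) < 1 / (km.2 + 1))
  choose U hUopen hUdense hUspec using hU
  have hGdense : Dense (⋂ km, U km) := dense_iInter_of_isOpen hUopen hUdense
  -- pick a good time u* in (0, t)
  obtain ⟨ustar, hustarG, hustarIoo⟩ :
      ∃ u : ℝ≥0, u ∈ ⋂ km, U km ∧ u ∈ Set.Ioo 0 t := by
    obtain ⟨u, hu1, hu2⟩ := hGdense.exists_mem_open isOpen_Ioo
      ⟨t / 2, half_pos ht, half_lt_self ht⟩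
    exact ⟨u, hu1, hu2⟩
  obtain ⟨hustar_pos, hustar_lt⟩ := hustarIoo
  set s : ℝ≥0 := t - ustar with hs
  have hustar_le : ustar ≤ t := hustar_lt.le
  have hslt : s < t := tsub_lt_self ht hustar_pos
  set u : ℕ → ℝ≥0 := fun n => ((x n).1 : ℝ≥0) - s with hu
  have hu_tendsto : Filter.Tendsto u Filter.atTop (𝓝 ustar) := by
    have : Filter.Tendsto (fun n => ((x n).1 : ℝ≥0) - s) Filter.atTop (𝓝 (t - s)) :=
      ht'.sub tendsto_const_nhds
    rwa [show t - s = ustar from tsub_tsub_cancel_of_le hustar_le] at this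
  have hev : ∀ᶠ n in Filter.atTop, s + u n = ((x n).1 : ℝ≥0) := by
    filter_upwards [ht'.eventually (eventually_gt_nhds hslt)] with n hn
    exact add_tsub_cancel_of_le hn.le
  -- the intermediate sequence
  set d : ℕ → ↥M := fun n => φ (u n) (c n) with hd
  have hdnorm : ∀ n, ‖((d n : ↥M) : H →L[ℂ] H)‖ ≤ 2 :=
    fun n => (hcontr (u n) (c n)).trans (hcnorm n)
  have hd_k : ∀ k : ℕ, Filter.Tendsto
      (fun n => ((d n : ↥M) : H →L[ℂ] H) (TopologicalSpace.denseSeq H k))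
      Filter.atTop (𝓝 0) := by
    intro k
    rw [NormedAddCommGroup.tendsto_nhds_zero]
    intro ε hε
    obtain ⟨m, hm⟩ := exists_nat_one_div_lt hε
    have hmem : ustar ∈ U (k, m) := Set.mem_iInter.mp hustarG (k, m)
    obtain ⟨N, V, hV, hprop⟩ := hUspec (k, m) ustar hmem
    filter_upwards [hu_tendsto hV, Filter.eventually_ge_atTop N] with n hnV hnN
    calc ‖((d n : ↥M) : H →L[ℂ] H) (TopologicalSpace.denseSeq H k)‖
        = g k n (u n) := rfl
      _ ≤ 1 / (m + 1) := hprop n hnN (u n) hnV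
      _ < ε := hm
  have hd_all : ∀ ξ : H, Filter.Tendsto (fun n => ((d n : ↥M) : H →L[ℂ] H) ξ)
      Filter.atTop (𝓝 0) := by
    intro ξ
    rw [NormedAddCommGroup.tendsto_nhds_zero]
    intro ε hε
    obtain ⟨k, hk⟩ := (TopologicalSpace.denseRange_denseSeq H).exists_dist_lt ξ
      (by positivity : (0:ℝ) < ε/4)
    have h2 := NormedAddCommGroup.tendsto_nhds_zero.mp (hd_k k) (ε/2) (by positivity)
    filter_upwards [h2] with n hn
    have hsplit : ((d n : ↥M) : H →L[ℂ] H) ξ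
        = ((d n : ↥M) : H →L[ℂ] H) (ξ - TopologicalSpace.denseSeq H k)
          + ((d n : ↥M) : H →L[ℂ] H) (TopologicalSpace.denseSeq H k) := by
      rw [map_sub]; abel
    rw [hsplit]
    calc ‖((d n : ↥M) : H →L[ℂ] H) (ξ - TopologicalSpace.denseSeq H k)
          + ((d n : ↥M) : H →L[ℂ] H) (TopologicalSpace.denseSeq H k)‖
        ≤ ‖((d n : ↥M) : H →L[ℂ] H) (ξ - TopologicalSpace.denseSeq H k)‖
          + ‖((d n : ↥M) : H →L[ℂ] H) (TopologicalSpace.denseSeq H k)‖ := norm_add_le _ _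
      _ < 2 * (ε/4) + ε/2 := by
          refine add_lt_add_of_le_of_lt ?_ hn
          calc ‖((d n : ↥M) : H →L[ℂ] H) (ξ - TopologicalSpace.denseSeq H k)‖
              ≤ ‖((d n : ↥M) : H →L[ℂ] H)‖ * ‖ξ - TopologicalSpace.denseSeq H k‖ :=
                ContinuousLinearMap.le_opNorm _ _
            _ ≤ 2 * (ε/4) := by
                refine mul_le_mul (hdnorm n) ?_ (norm_nonneg _) (by norm_num)
                rw [← dist_eq_norm]; exact hk.le
      _ = ε := by ring
  -- apply φ s
  have hφd : ∀ ξ : H, Filter.Tendsto (fun n => ((φ s (d n) : ↥M) : H →L[ℂ] H) ξ)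
      Filter.atTop (𝓝 0) := keySOT s d hdnorm hd_all
  -- eventual equality with φ t_n (c n)
  have heq : ∀ᶠ n in Filter.atTop, φ ((x n).1 : ℝ≥0) (c n) = φ s (d n) := by
    filter_upwards [hev] with n hn
    rw [← hn, hadd s (u n)]
    rfl
  have hstep2 : ∀ ξ : H, Filter.Tendsto (fun n => ((φ ((x n).1 : ℝ≥0) (c n) : ↥M) : H →L[ℂ] H) ξ)
      Filter.atTop (𝓝 0) := by
    intro ξ
    refine (hφd ξ).congr' ?_
    filter_upwards [heq] with n hn
    rw [hn]
  -- time continuity term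
  have hstep1 : ∀ ξ : H, Filter.Tendsto
      (fun n => ((φ ((x n).1 : ℝ≥0) (a : ↥M) : ↥M) : H →L[ℂ] H) ξ)
      Filter.atTop (𝓝 (((φ t (a : ↥M) : ↥M) : H →L[ℂ] H) ξ)) := by
    intro ξ
    exact tendsto_sotvN_iff.mp (((hcont (a : ↥M)).tendsto t).comp ht') ξ
  -- assemble
  rw [tendsto_ball_iff]
  intro ξ
  have hsplit : ∀ n, ((φ ((x n).1 : ℝ≥0) ((x n).2 : ↥M) : ↥M) : H →L[ℂ] H) ξ
      = ((φ ((x n).1 : ℝ≥0) (c n) : ↥M) : H →L[ℂ] H) ξ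
        + ((φ ((x n).1 : ℝ≥0) (a : ↥M) : ↥M) : H →L[ℂ] H) ξ := by
    intro n
    have : φ ((x n).1 : ℝ≥0) ((x n).2 : ↥M)
        = φ ((x n).1 : ℝ≥0) (c n) + φ ((x n).1 : ℝ≥0) (a : ↥M) := by
      rw [← map_add]
      congr 1
      simp [hcdef]
    rw [this]
    rfl
  have := (hstep2 ξ).add (hstep1 ξ)
  rw [zero_add] at this
  refine this.congr ?_
  intro n
  exact (hsplit n).symm
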